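/- Let A be a rigid abelian symmetric monoidal category in which End(1) is a field. Then A is integral: for morphisms f and g in A, if f ⊗ g = 0 then f = 0 or g = 0. -/

import Mathlib

open CategoryTheory CategoryTheory.Limits CategoryTheory.MonoidalCategory

namespace RigidIntegralAux

variable {A : Type*} [Category A] [Abelian A]
    [MonoidalCategory A] [SymmetricCategory A] [MonoidalPreadditive A]
    [RigidCategory A]

lemma mono_whiskerLeft (X : A) {P Q : A} (h : P ⟶ Q) [Mono h] : Mono (X ◁ h) := by
  haveI := Functor.preservesMonomorphisms_of_adjunction (tensorLeftAdjunction X (Xᘁ))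
  have := (tensorLeft X).map_mono h
  simpa using this

lemma epi_whiskerLeft (X : A) {P Q : A} (h : P ⟶ Q) [Epi h] : Epi (X ◁ h) := by
  haveI := Functor.preservesEpimorphisms_of_adjunction (tensorLeftAdjunction (ᘁX) X)
  have := (tensorLeft X).map_epi h
  simpa using this

lemma mono_whiskerRight (X : A) {P Q : A} (h : P ⟶ Q) [Mono h] : Mono (h ▷ X) := by
  haveI := Functor.preservesMonomorphisms_of_adjunction (tensorRightAdjunction (ᘁX) X)
  have := (tensorRight X).map_mono h
  simpa using this

lemma epi_whiskerRight (X : A) {P Q : A} (h : P ⟶ Q) [Epi h] : Epi (h ▷ X) := by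
  haveI := Functor.preservesEpimorphisms_of_adjunction (tensorRightAdjunction X (Xᘁ))
  have := (tensorRight X).map_epi h
  simpa using this

lemma mono_tensorHom {P Q R S : A} (a : P ⟶ Q) (b : R ⟶ S) [Mono a] [Mono b] :
    Mono (a ⊗ₘ b) := by
  rw [MonoidalCategory.tensorHom_def]
  haveI := mono_whiskerRight R a
  haveI := mono_whiskerLeft Q b
  exact mono_comp _ _

lemma epi_tensorHom {P Q R S : A} (a : P ⟶ Q) (b : R ⟶ S) [Epi a] [Epi b] :
    Epi (a ⊗ₘ b) := by
  rw [MonoidalCategory.tensorHom_def]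
  haveI := epi_whiskerRight R a
  haveI := epi_whiskerLeft Q b
  exact epi_comp _ _

lemma isZero_tensor_left {P : A} (hP : IsZero P) (X : A) : IsZero (P ⊗ X) := by
  rw [IsZero.iff_id_eq_zero] at hP ⊢
  rw [← id_tensorHom_id, hP, MonoidalPreadditive.zero_tensor]

lemma isZero_tensor_right {P : A} (hP : IsZero P) (X : A) : IsZero (X ⊗ P) := by
  rw [IsZero.iff_id_eq_zero] at hP ⊢
  rw [← id_tensorHom_id, hP, MonoidalPreadditive.tensor_zero]

/-- The swap identity for a mono into the unit. -/
lemma unit_swap {U : A} (u : U ⟶ 𝟙_ A) [Mono u] :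
    (U ◁ u) ≫ (ρ_ U).hom = (u ▷ U) ≫ (λ_ U).hom := by
  rw [← cancel_mono u]
  simp only [Category.assoc]
  calc U ◁ u ≫ (ρ_ U).hom ≫ u
      = U ◁ u ≫ u ▷ 𝟙_ A ≫ (ρ_ (𝟙_ A)).hom := by rw [rightUnitor_naturality]
    _ = u ▷ U ≫ 𝟙_ A ◁ u ≫ (λ_ (𝟙_ A)).hom := by
        rw [← Category.assoc, whisker_exchange, unitors_equal]; simp
    _ = u ▷ U ≫ (λ_ U).hom ≫ u := by rw [leftUnitor_naturality]

/-- Tensoring a mono into the unit with its cokernel gives zero. -/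
lemma unit_whisker_cokernel_zero {U T : A} (u : U ⟶ 𝟙_ A) (q : 𝟙_ A ⟶ T)
    (hq : u ≫ q = 0) : (U ◁ q) ≫ (u ▷ T) = 0 := by
  rw [whisker_exchange]
  have h1 : u ▷ 𝟙_ A = (ρ_ U).hom ≫ u ≫ (ρ_ (𝟙_ A)).inv := by
    rw [← rightUnitor_naturality]; simp
  have h2 : 𝟙_ A ◁ q = (λ_ (𝟙_ A)).hom ≫ q ≫ (λ_ T).inv := by
    rw [leftUnitor_inv_naturality]; simp
  rw [h1, h2]
  simp [unitors_equal, reassoc_of% hq]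

lemma isIso_whiskerLeft_of_mono_unit {U : A} (u : U ⟶ 𝟙_ A) [Mono u] :
    IsIso (U ◁ u) := by
  -- the cokernel
  set T := cokernel u with hT
  set q := cokernel.π u with hq
  -- U ⊗ T is zero
  have hz : IsZero (U ⊗ T) := by
    have h0 : (U ◁ q) ≫ (u ▷ T) = 0 :=
      unit_whisker_cokernel_zero u q (cokernel.condition u)
    haveI : Epi q := coequalizer.π_epi
    haveI : Epi (U ◁ q) := epi_whiskerLeft U q
    have h1 : u ▷ T = 0 := by
      rw [← cancel_epi (U ◁ q), h0, comp_zero]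
    haveI : Mono (u ▷ T) := mono_whiskerRight T u
    rw [IsZero.iff_id_eq_zero, ← cancel_mono (u ▷ T), h1, comp_zero, zero_comp]
  haveI : Mono (U ◁ u) := mono_whiskerLeft U u
  haveI : PreservesColimitsOfSize.{0, 0} (tensorLeft U) :=
    (tensorLeftAdjunction (ᘁU) U).leftAdjoint_preservesColimits
  have hco : IsZero (cokernel (U ◁ u)) := by
    have e : (tensorLeft U).obj (cokernel u) ≅ cokernel ((tensorLeft U).map u) :=
      PreservesCokernel.iso (tensorLeft U) u
    exact IsZero.of_iso hz
      ((cokernelIsoOfEq (by simp : (tensorLeft U).map u = U ◁ u)).symm ≪≫ e.symm)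
  haveI : Epi (U ◁ u) := by
    apply Abelian.epi_of_cokernel_π_eq_zero
    exact hco.eq_of_tgt _ _
  exact isIso_of_mono_of_epi _

/-- The dimension identity for a mono into the unit. -/
lemma unit_dim_comp {U : A} (u : U ⟶ 𝟙_ A) [Mono u] :
    u ≫ η_ U (Uᘁ) ≫ (β_ U (Uᘁ)).hom ≫ ε_ U (Uᘁ) = u := by
  have hswap := unit_swap u
  have hswap' : U ◁ u = u ▷ U ≫ (λ_ U).hom ≫ (ρ_ U).inv := by
    rw [← Category.assoc, ← hswap]; simp
  set c : 𝟙_ A ⟶ Uᘁ := η_ U (Uᘁ) ≫ (u ▷ (Uᘁ)) ≫ (λ_ (Uᘁ)).hom with hc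
  have CH2 : u ≫ η_ U (Uᘁ) = (ρ_ U).inv ≫ U ◁ c := by
    rw [hc]; symm
    calc (ρ_ U).inv ≫ U ◁ (η_ U (Uᘁ) ≫ u ▷ (Uᘁ) ≫ (λ_ (Uᘁ)).hom)
        = (ρ_ U).inv ≫ U ◁ η_ U (Uᘁ) ≫ U ◁ (u ▷ (Uᘁ)) ≫ U ◁ (λ_ (Uᘁ)).hom := by
          simp only [MonoidalCategory.whiskerLeft_comp]
      _ = (ρ_ U).inv ≫ U ◁ η_ U (Uᘁ) ≫ ((α_ U U (Uᘁ)).inv ≫ ((U ◁ u) ▷ (Uᘁ)) ≫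
            (α_ U (𝟙_ A) (Uᘁ)).hom) ≫ U ◁ (λ_ (Uᘁ)).hom := by
          rw [whisker_assoc_symm]
      _ = (ρ_ U).inv ≫ U ◁ η_ U (Uᘁ) ≫ (α_ U U (Uᘁ)).inv ≫ ((u ▷ U) ▷ (Uᘁ)) ≫
            ((λ_ U).hom ▷ (Uᘁ)) ≫ ((ρ_ U).inv ▷ (Uᘁ)) ≫ (α_ U (𝟙_ A) (Uᘁ)).hom ≫
            U ◁ (λ_ (Uᘁ)).hom := by
          rw [hswap']; simp only [comp_whiskerRight, Category.assoc]
      _ = (ρ_ U).inv ≫ U ◁ η_ U (Uᘁ) ≫ (α_ U U (Uᘁ)).inv ≫ ((u ▷ U) ▷ (Uᘁ)) ≫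
            ((λ_ U).hom ▷ (Uᘁ)) := by
          rw [triangle]; simp
      _ = (ρ_ U).inv ≫ U ◁ η_ U (Uᘁ) ≫ (u ▷ (U ⊗ (Uᘁ))) ≫ (α_ (𝟙_ A) U (Uᘁ)).inv ≫
            ((λ_ U).hom ▷ (Uᘁ)) := by
          rw [associator_inv_naturality_left_assoc]
      _ = (ρ_ U).inv ≫ (u ▷ 𝟙_ A) ≫ (𝟙_ A ◁ η_ U (Uᘁ)) ≫ (α_ (𝟙_ A) U (Uᘁ)).inv ≫
            ((λ_ U).hom ▷ (Uᘁ)) := by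
          rw [← whisker_exchange_assoc]
      _ = u ≫ η_ U (Uᘁ) := by
          rw [MonoidalCategory.whiskerRight_id, MonoidalCategory.id_whiskerLeft]
          simp [unitors_equal]
  calc u ≫ η_ U (Uᘁ) ≫ (β_ U (Uᘁ)).hom ≫ ε_ U (Uᘁ)
      = (ρ_ U).inv ≫ (U ◁ c ≫ (β_ U (Uᘁ)).hom) ≫ ε_ U (Uᘁ) := by
        rw [reassoc_of% CH2]; simp
    _ = (ρ_ U).inv ≫ ((β_ U (𝟙_ A)).hom ≫ c ▷ U) ≫ ε_ U (Uᘁ) := by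
        rw [BraidedCategory.braiding_naturality_right]
    _ = (λ_ U).inv ≫ (c ▷ U) ≫ ε_ U (Uᘁ) := by
        rw [braiding_tensorUnit_right]; simp
    _ = (λ_ U).inv ≫ (η_ U (Uᘁ) ▷ U) ≫ ((u ▷ (Uᘁ)) ▷ U) ≫ ((λ_ (Uᘁ)).hom ▷ U) ≫
          ε_ U (Uᘁ) := by
        rw [hc]; simp only [comp_whiskerRight, Category.assoc]
    _ = (λ_ U).inv ≫ (η_ U (Uᘁ) ▷ U) ≫ ((u ▷ (Uᘁ)) ▷ U) ≫ (α_ (𝟙_ A) (Uᘁ) U).hom ≫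
          (λ_ ((Uᘁ) ⊗ U)).hom ≫ ε_ U (Uᘁ) := by
        rw [leftUnitor_whiskerRight]; simp
    _ = (λ_ U).inv ≫ (η_ U (Uᘁ) ▷ U) ≫ (α_ U (Uᘁ) U).hom ≫ (u ▷ ((Uᘁ) ⊗ U)) ≫
          (λ_ ((Uᘁ) ⊗ U)).hom ≫ ε_ U (Uᘁ) := by
        rw [associator_naturality_left_assoc]
    _ = (λ_ U).inv ≫ (η_ U (Uᘁ) ▷ U) ≫ (α_ U (Uᘁ) U).hom ≫ (u ▷ ((Uᘁ) ⊗ U)) ≫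
          (𝟙_ A ◁ ε_ U (Uᘁ)) ≫ (λ_ (𝟙_ A)).hom := by
        rw [leftUnitor_naturality]
    _ = (λ_ U).inv ≫ (η_ U (Uᘁ) ▷ U) ≫ (α_ U (Uᘁ) U).hom ≫ (U ◁ ε_ U (Uᘁ)) ≫
          (u ▷ 𝟙_ A) ≫ (λ_ (𝟙_ A)).hom := by
        rw [← whisker_exchange_assoc]
    _ = u := by
        rw [ExactPairing.evaluation_coevaluation_assoc, MonoidalCategory.whiskerRight_id]
        simp [unitors_equal]

set_option maxHeartbeats 1000000 in
/-- Every mono into the unit admits a retraction. -/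
lemma unit_retraction {U : A} (u : U ⟶ 𝟙_ A) [Mono u] :
    ∃ r : 𝟙_ A ⟶ U, u ≫ r = 𝟙 U := by
  haveI := isIso_whiskerLeft_of_mono_unit u
  have hI : ((tensorLeftHomEquiv U U (Uᘁ) U).symm ((ρ_ U).inv ≫ inv (U ◁ u))) ≫ u
      = ε_ U (Uᘁ) := by
    apply (tensorLeftHomEquiv U U (Uᘁ) (𝟙_ A)).injective
    rw [tensorLeftHomEquiv_naturality, Equiv.apply_symm_apply]
    simp [tensorLeftHomEquiv]
  refine ⟨η_ U (Uᘁ) ≫ (β_ U (Uᘁ)).hom ≫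
    (tensorLeftHomEquiv U U (Uᘁ) U).symm ((ρ_ U).inv ≫ inv (U ◁ u)), ?_⟩
  rw [← cancel_mono u]
  simp only [Category.assoc, Category.id_comp]
  rw [hI]
  exact unit_dim_comp u

/-- With `End (𝟙)` a field, a subobject of the unit is zero or everything. -/
lemma unit_subobject (hA : IsField (End (𝟙_ A))) {U : A} (u : U ⟶ 𝟙_ A) [Mono u] :
    IsZero U ∨ IsIso u := by
  obtain ⟨r, hr⟩ := unit_retraction u
  set e : End (𝟙_ A) := r ≫ u with he
  rcases eq_or_ne e 0 with h0 | hne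
  · left
    rw [IsZero.iff_id_eq_zero, ← hr]
    have : u ≫ r = (u ≫ r) ≫ (u ≫ r) := by rw [hr]; simp
    rw [this]
    have : (u ≫ r) ≫ u ≫ r = u ≫ e ≫ r := by simp [he]
    rw [this, h0]
    simp
  · right
    obtain ⟨b, hb⟩ := hA.mul_inv_cancel hne
    have ht : (b ≫ r) ≫ u = 𝟙 (𝟙_ A) := by
      have : e * b = b ≫ e := End.mul_def e b
      rw [this] at hb
      simpa [he] using hb
    haveI : IsSplitEpi u := ⟨⟨⟨b ≫ r, ht⟩⟩⟩
    exact isIso_of_mono_of_epi u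

/-- With `End (𝟙)` a field, any nonzero map out of the unit is mono. -/
lemma unit_mono (hA : IsField (End (𝟙_ A))) {P : A} (a : 𝟙_ A ⟶ P) (ha : a ≠ 0) :
    Mono a := by
  rcases unit_subobject hA (kernel.ι a) with hz | hiso
  · exact Abelian.mono_of_kernel_ι_eq_zero a (hz.eq_of_src _ _)
  · exfalso
    apply ha
    rw [← Category.id_comp a, ← IsIso.inv_hom_id (kernel.ι a), Category.assoc,
      kernel.condition, comp_zero]

lemma not_isZero_unit (hA : IsField (End (𝟙_ A))) : ¬ IsZero (𝟙_ A) := by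
  intro hz
  obtain ⟨x, y, hxy⟩ := hA.exists_pair_ne
  exact hxy (hz.eq_of_src x y)

lemma coev_ne_zero {U : A} (hU : ¬ IsZero U) : η_ U (Uᘁ) ≠ 0 := by
  intro h0
  apply hU
  rw [IsZero.iff_id_eq_zero]
  have h1 := ExactPairing.evaluation_coevaluation U (Uᘁ)
  rw [h0] at h1
  simp only [MonoidalPreadditive.zero_whiskerRight, zero_comp] at h1
  calc 𝟙 U = (λ_ U).inv ≫ ((λ_ U).hom ≫ (ρ_ U).inv) ≫ (ρ_ U).hom := by simp
    _ = 0 := by rw [← h1]; simp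

set_option maxHeartbeats 1000000 in
/-- The tensor product of two nonzero objects is nonzero. -/
lemma tensor_ne_zero (hA : IsField (End (𝟙_ A))) {U V : A}
    (hU : ¬ IsZero U) (hV : ¬ IsZero V) : ¬ IsZero (U ⊗ V) := by
  intro hUV
  haveI : Mono (η_ U (Uᘁ)) := unit_mono hA _ (coev_ne_zero hU)
  haveI : Mono (η_ V (Vᘁ)) := unit_mono hA _ (coev_ne_zero hV)
  haveI : Mono (η_ U (Uᘁ) ⊗ₘ η_ V (Vᘁ)) := RigidIntegralAux.mono_tensorHom _ _
  -- the target of η ⊗ η is zero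
  have htgt : IsZero ((U ⊗ (Uᘁ)) ⊗ (V ⊗ (Vᘁ))) := by
    have h1 : IsZero ((U ⊗ V) ⊗ (Uᘁ)) := isZero_tensor_left hUV _
    have e1 : (U ⊗ (Uᘁ)) ⊗ V ≅ (U ⊗ V) ⊗ (Uᘁ) :=
      α_ U (Uᘁ) V ≪≫ whiskerLeftIso U (β_ (Uᘁ) V) ≪≫ (α_ U V (Uᘁ)).symm
    have h2 : IsZero ((U ⊗ (Uᘁ)) ⊗ V) := h1.of_iso e1
    have h3 : IsZero (((U ⊗ (Uᘁ)) ⊗ V) ⊗ (Vᘁ)) := isZero_tensor_left h2 _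
    exact h3.of_iso (α_ (U ⊗ (Uᘁ)) V (Vᘁ)).symm
  have hzero : (η_ U (Uᘁ) ⊗ₘ η_ V (Vᘁ)) = 0 := htgt.eq_of_tgt _ _
  have hsrc : IsZero (𝟙_ A ⊗ 𝟙_ A) := by
    rw [IsZero.iff_id_eq_zero, ← cancel_mono (η_ U (Uᘁ) ⊗ₘ η_ V (Vᘁ)), hzero,
      comp_zero, zero_comp]
  exact not_isZero_unit hA (hsrc.of_iso (λ_ (𝟙_ A)).symm)

end RigidIntegralAux

/-- A rigid abelian symmetric monoidal category with `End(1)` a field is integral: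
`f ⊗ g = 0` implies `f = 0` or `g = 0`. -/
theorem rigid_abelian_integral
    {A : Type*} [Category A] [Abelian A]
    [MonoidalCategory A] [SymmetricCategory A] [MonoidalPreadditive A]
    [RigidCategory A] (hA : IsField (End (𝟙_ A)))
    {X Y Z W : A} (f : X ⟶ Y) (g : Z ⟶ W) (h : f ⊗ₘ g = 0) :
    f = 0 ∨ g = 0 := by
  by_contra hcon
  push_neg at hcon
  obtain ⟨hf, hg⟩ := hcon
  -- pass to images
  have hU : ¬ IsZero (image f) := by
    intro hz
    apply hf
    rw [← image.fac f, hz.eq_of_src (image.ι f) 0, comp_zero]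
  have hV : ¬ IsZero (image g) := by
    intro hz
    apply hg
    rw [← image.fac g, hz.eq_of_src (image.ι g) 0, comp_zero]
  have hUV : IsZero (image f ⊗ image g) := by
    have h0 : (factorThruImage f ⊗ₘ factorThruImage g) ≫ (image.ι f ⊗ₘ image.ι g) = 0 := by
      rw [tensorHom_comp_tensorHom, image.fac, image.fac, h]
    haveI : Epi (factorThruImage f ⊗ₘ factorThruImage g) := RigidIntegralAux.epi_tensorHom _ _
    have h1 : (image.ι f ⊗ₘ image.ι g) = 0 := by
      rw [← cancel_epi (factorThruImage f ⊗ₘ factorThruImage g), h0, comp_zero]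
    haveI : Mono (image.ι f ⊗ₘ image.ι g) := RigidIntegralAux.mono_tensorHom _ _
    rw [IsZero.iff_id_eq_zero, ← cancel_mono (image.ι f ⊗ₘ image.ι g), h1, comp_zero,
      zero_comp]
  exact RigidIntegralAux.tensor_ne_zero hA hU hV hUV
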